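/- Let C be a triangulated category and let G be an object that generates C, i.e. C has no proper thick subcategory containing G. Then a sequence X₀ → X₁ → X₂ → ⋯ in C is a Cauchy sequence if and only if for every n ∈ ℤ the induced map Hom(ΣⁿG, X_i) → Hom(ΣⁿG, X_{i+1}) is bijective for all sufficiently large i. -/

import Mathlib

/-!
STATEMENT 15: Let `C` be a triangulated category and `G` an object generating `C`
(no proper thick subcategory contains `G`).  A sequence `X : ℕ ⥤ C` is Cauchy iff for
every `n : ℤ` the maps `Hom(ΣⁿG, Xᵢ) ⟶ Hom(ΣⁿG, Xᵢ₊₁)` are bijective for `i` large.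
-/

open CategoryTheory CategoryTheory.Limits CategoryTheory.Pretriangulated

universe v u

namespace SeqCompletion

def IsCauchy {C : Type u} [Category.{v} C] (X : ℕ ⥤ C) : Prop :=
  ∀ C' : C, ∃ n : ℕ, ∀ (i j : ℕ), n ≤ i → ∀ (hij : i ≤ j),
    Function.Bijective (fun g : C' ⟶ X.obj i => g ≫ X.map (homOfLE hij))

variable (C : Type u) [Category.{v} C] [Preadditive C] [HasZeroObject C]
  [HasShift C ℤ] [∀ n : ℤ, (shiftFunctor C n).Additive] [Pretriangulated C]

/-- A thick subcategory of a triangulated category: a triangulated subcategory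
(containing the zero objects, closed under isomorphisms, shifts and extensions)
that is moreover closed under direct summands (retracts). -/
structure ThickSubcat : Type (max u v) where
  P : C → Prop
  zero : ∀ Z : C, Limits.IsZero Z → P Z
  isoClosed : ∀ {X Y : C}, (X ≅ Y) → P X → P Y
  shiftClosed : ∀ (X : C) (n : ℤ), P X → P (X⟦n⟧)
  extClosed : ∀ Tr ∈ distTriang C, P Tr.obj₁ → P Tr.obj₂ → P Tr.obj₃
  summandClosed : ∀ {X Z : C}, (∃ (s : Z ⟶ X) (r : X ⟶ Z), s ≫ r = 𝟙 Z) → P X → P Z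

variable {C}

set_option linter.unusedSectionVars false

/-- `Y` is eventually stable with respect to `X`. -/
def Stable (X : ℕ ⥤ C) (Y : C) : Prop :=
  ∃ n : ℕ, ∀ (i j : ℕ), n ≤ i → ∀ (hij : i ≤ j),
    Function.Bijective (fun g : Y ⟶ X.obj i => g ≫ X.map (homOfLE hij))

lemma Stable.of_iso {X : ℕ ⥤ C} {Y Z : C} (e : Y ≅ Z) (h : Stable X Y) : Stable X Z := by
  obtain ⟨n, h⟩ := h
  refine ⟨n, fun i j hi hij => ?_⟩
  have hb := h i j hi hij
  constructor
  · intro g₁ g₂ hg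
    have : e.hom ≫ g₁ = e.hom ≫ g₂ := hb.injective (by simpa using congrArg (e.hom ≫ ·) hg)
    simpa using congrArg (e.inv ≫ ·) this
  · intro g'
    obtain ⟨u, hu⟩ := hb.surjective (e.hom ≫ g')
    exact ⟨e.inv ≫ u, by simp only [Category.assoc] at hu ⊢; rw [hu]; simp⟩

lemma Stable.zero {X : ℕ ⥤ C} {Z : C} (hZ : IsZero Z) : Stable X Z :=
  ⟨0, fun i j _ hij => ⟨fun g₁ g₂ _ => hZ.eq_of_src g₁ g₂,
    fun g' => ⟨0, hZ.eq_of_src _ _⟩⟩⟩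

lemma Stable.summand {X : ℕ ⥤ C} {Y Z : C} (s : Z ⟶ Y) (r : Y ⟶ Z) (hsr : s ≫ r = 𝟙 Z)
    (h : Stable X Y) : Stable X Z := by
  obtain ⟨n, h⟩ := h
  refine ⟨n, fun i j hi hij => ?_⟩
  have hb := h i j hi hij
  constructor
  · intro g₁ g₂ hg
    have : r ≫ g₁ = r ≫ g₂ := hb.injective (by
      simp only [Category.assoc]
      exact congrArg (r ≫ ·) hg)
    calc g₁ = s ≫ r ≫ g₁ := by rw [← Category.assoc, hsr, Category.id_comp]
    _ = s ≫ r ≫ g₂ := by rw [this]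
    _ = g₂ := by rw [← Category.assoc, hsr, Category.id_comp]
  · intro g'
    obtain ⟨u, hu⟩ := hb.surjective (r ≫ g')
    replace hu : u ≫ X.map (homOfLE hij) = r ≫ g' := hu
    refine ⟨s ≫ u, ?_⟩
    simp only [Category.assoc]
    rw [hu, ← Category.assoc, hsr, Category.id_comp]

lemma Stable.ext {X : ℕ ⥤ C} (T : Triangle C) (hT : T ∈ distTriang C)
    (h₁ : Stable X T.obj₁) (h₂ : Stable X T.obj₂)
    (h₁' : Stable X (T.obj₁⟦(1 : ℤ)⟧)) (h₂' : Stable X (T.obj₂⟦(1 : ℤ)⟧)) :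
    Stable X T.obj₃ := by
  obtain ⟨n₁, h₁⟩ := h₁
  obtain ⟨n₂, h₂⟩ := h₂
  obtain ⟨n₃, h₁'⟩ := h₁'
  obtain ⟨n₄, h₂'⟩ := h₂'
  refine ⟨max (max n₁ n₂) (max n₃ n₄), fun i j hi hij => ?_⟩
  have hi₁ : n₁ ≤ i := le_trans (le_trans (le_max_left _ _) (le_max_left _ _)) hi
  have hi₂ : n₂ ≤ i := le_trans (le_trans (le_max_right _ _) (le_max_left _ _)) hi
  have hi₃ : n₃ ≤ i := le_trans (le_trans (le_max_left _ _) (le_max_right _ _)) hi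
  have hi₄ : n₄ ≤ i := le_trans (le_trans (le_max_right _ _) (le_max_right _ _)) hi
  have b₁ := h₁ i j hi₁ hij
  have b₂ := h₂ i j hi₂ hij
  have b₃ := h₁' i j hi₃ hij
  have b₄ := h₂' i j hi₄ hij
  set f : X.obj i ⟶ X.obj j := X.map (homOfLE hij) with hf
  constructor
  · intro g₁ g₂ hg
    -- reduce to g ≫ f = 0 → g = 0 by additivity
    suffices hsuff : ∀ g : T.obj₃ ⟶ X.obj i, g ≫ f = 0 → g = 0 by
      have := hsuff (g₁ - g₂) (by
        simp only [Preadditive.sub_comp]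
        exact sub_eq_zero_of_eq hg)
      exact sub_eq_zero.mp this
    intro g hg0
    have hbg : T.mor₂ ≫ g = 0 := b₂.injective (by
      simp only [Category.assoc, hg0, Limits.comp_zero, Limits.zero_comp])
    obtain ⟨h, hh⟩ := Triangle.yoneda_exact₃ T hT g hbg
    -- h : T.obj₁⟦1⟧ ⟶ X.obj i, g = T.mor₃ ≫ h
    have hch : T.mor₃ ≫ (h ≫ f) = 0 := by rw [← Category.assoc, ← hh, hg0]
    -- rotated triangle: obj₃ = T.obj₁⟦1⟧, mor₂ = T.mor₃
    obtain ⟨q, hq⟩ := Triangle.yoneda_exact₃ T.rotate (rot_of_distTriang T hT) (h ≫ f) hch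
    -- q : T.obj₂⟦1⟧ ⟶ X.obj j, h ≫ f = T.rotate.mor₃ ≫ q
    obtain ⟨q', hq'⟩ : ∃ q' : (shiftFunctor C 1).obj T.rotate.obj₁ ⟶ X.obj i, q' ≫ f = q :=
      b₄.surjective q
    replace hq' : q' ≫ f = q := hq'
    have hinj : h = T.rotate.mor₃ ≫ q' := b₃.injective (by
      show h ≫ f = (T.rotate.mor₃ ≫ q') ≫ f
      exact hq.trans (by rw [Category.assoc, hq']))
    erw [hh, hinj, ← Category.assoc]
    have : T.rotate.mor₂ ≫ T.rotate.mor₃ = 0 := comp_distTriang_mor_zero₂₃ _ (rot_of_distTriang T hT)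
    have h23 : T.mor₃ ≫ T.rotate.mor₃ = 0 := this
    rw [h23, Limits.zero_comp]
  · intro g'
    obtain ⟨u, hu⟩ := b₂.surjective (T.mor₂ ≫ g')
    replace hu : u ≫ f = T.mor₂ ≫ g' := hu
    have hau : T.mor₁ ≫ u = 0 := b₁.injective (by
      show (T.mor₁ ≫ u) ≫ f = 0 ≫ f
      rw [Category.assoc, hu, ← Category.assoc, comp_distTriang_mor_zero₁₂ _ hT,
        Limits.zero_comp, Limits.zero_comp])
    obtain ⟨v, hv⟩ := Triangle.yoneda_exact₂ T hT u hau
    have hw0 : T.mor₂ ≫ (g' - v ≫ f) = 0 := by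
      rw [Preadditive.comp_sub, ← Category.assoc, ← hv, hu, sub_self]
    obtain ⟨w, hw⟩ := Triangle.yoneda_exact₃ T hT _ hw0
    obtain ⟨w', hw'⟩ := b₃.surjective w
    replace hw' : w' ≫ f = w := hw'
    refine ⟨v + T.mor₃ ≫ w', ?_⟩
    show (v + T.mor₃ ≫ w') ≫ f = g'
    rw [Preadditive.add_comp, Category.assoc, hw', ← hw]
    abel

/-- The thick subcategory of objects all of whose shifts are stable w.r.t. `X`. -/
noncomputable def stableSubcat (X : ℕ ⥤ C) : ThickSubcat C where
  P Y := ∀ m : ℤ, Stable X (Y⟦m⟧)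
  zero Z hZ m := Stable.zero ((shiftFunctor C m).map_isZero hZ)
  isoClosed e h m := (h m).of_iso ((shiftFunctor C m).mapIso e)
  shiftClosed Y k h m := (h (k + m)).of_iso ((shiftFunctorAdd C k m).app Y)
  extClosed Tr hTr h1 h2 m := by
    have hT' := Pretriangulated.Triangle.shift_distinguished Tr hTr m
    exact Stable.ext _ hT' (h1 m) (h2 m)
      ((h1 (m + 1)).of_iso ((shiftFunctorAdd C m 1).app Tr.obj₁))
      ((h2 (m + 1)).of_iso ((shiftFunctorAdd C m 1).app Tr.obj₂))
  summandClosed := by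
    rintro Y Z ⟨s, r, hsr⟩ h m
    exact Stable.summand (s⟦m⟧') (r⟦m⟧')
      (by rw [← CategoryTheory.Functor.map_comp, hsr, CategoryTheory.Functor.map_id]) (h m)


theorem isCauchy_iff_generator_stable (G : C)
    (hGen : ∀ S : ThickSubcat C, S.P G → ∀ X : C, S.P X)
    (X : ℕ ⥤ C) :
    IsCauchy X ↔
      ∀ n : ℤ, ∃ N : ℕ, ∀ i : ℕ, N ≤ i →
        Function.Bijective
          (fun g : (G⟦n⟧) ⟶ X.obj i => g ≫ X.map (homOfLE (Nat.le_succ i))) := by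

  constructor
  · intro h n
    obtain ⟨N, hN⟩ := h (G⟦n⟧)
    exact ⟨N, fun i hi => hN i (i + 1) hi (Nat.le_succ i)⟩
  · intro h
    have hG : ∀ n : ℤ, Stable X (G⟦n⟧) := by
      intro n
      obtain ⟨N, hN⟩ := h n
      refine ⟨N, fun i j hi hij => ?_⟩
      induction j, hij using Nat.le_induction with
      | base =>
        have : homOfLE (le_refl i) = 𝟙 i := rfl
        simp only [this, X.map_id]
        exact ⟨fun a b hab => by simpa using hab, fun b => ⟨b, by simp⟩⟩
      | succ j hij ih =>
        have hcomp : X.map (homOfLE (le_trans hij (Nat.le_succ j))) =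
            X.map (homOfLE hij) ≫ X.map (homOfLE (Nat.le_succ j)) := by
          rw [← X.map_comp]; rfl
        have : (fun g : (G⟦n⟧) ⟶ X.obj i => g ≫ X.map (homOfLE (le_trans hij (Nat.le_succ j))))
            = (fun g : (G⟦n⟧) ⟶ X.obj j => g ≫ X.map (homOfLE (Nat.le_succ j))) ∘
              (fun g : (G⟦n⟧) ⟶ X.obj i => g ≫ X.map (homOfLE hij)) := by
          funext g; simp [hcomp]
        rw [this]
        exact Function.Bijective.comp (hN j (le_trans hi hij)) ih
    have hAll := hGen (stableSubcat X) (fun m => hG m)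
    intro C'
    have := (hAll C' 0).of_iso ((shiftFunctorZero C ℤ).app C')
    exact this

end SeqCompletion
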